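/- If parameters satisfy λ > −μ/2 + √(2μγ), λ < γ, and μ > 2λ > 0, then the cubic F(x) = (λ − γ)x + (μ/2 − λ)x² − (μ/2)x³ has exactly three nonnegative real roots: x = 0 and two distinct positive roots. -/

import Mathlib

/-- In region C the cubic has exactly the nonnegative roots 0 and two distinct positive ones. -/
theorem stmt_16 (lam mu gam : ℝ) (hlam : 0 < lam) (hmu : 0 < mu) (hgam : 0 < gam)
    (hd : -mu / 2 + Real.sqrt (2 * mu * gam) < lam) (hlg : lam < gam) (hml : 2 * lam < mu) :
    ∃ x₁ x₂ : ℝ, 0 < x₁ ∧ 0 < x₂ ∧ x₁ ≠ x₂ ∧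
      ∀ x : ℝ, 0 ≤ x →
        ((lam - gam) * x + (mu / 2 - lam) * x ^ 2 - mu / 2 * x ^ 3 = 0 ↔
          x = 0 ∨ x = x₁ ∨ x = x₂) := by
  have hmu' : mu ≠ 0 := hmu.ne'
  set D : ℝ := (mu / 2 - lam) ^ 2 + 2 * mu * (lam - gam) with hDdef
  -- D > 0 from hd
  have hsq : Real.sqrt (2 * mu * gam) < lam + mu / 2 := by linarith
  have hsqrtnn : (0:ℝ) ≤ Real.sqrt (2 * mu * gam) := Real.sqrt_nonneg _
  have h2mg : (0:ℝ) ≤ 2 * mu * gam := by positivity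
  have hD : 0 < D := by
    have h1 : 2 * mu * gam < (lam + mu / 2) ^ 2 := by
      have := Real.sq_sqrt h2mg
      nlinarith [hsq, hsqrtnn]
    rw [hDdef]; nlinarith
  set s : ℝ := Real.sqrt D with hsdef
  have hs2 : s ^ 2 = D := Real.sq_sqrt hD.le
  have hspos : 0 < s := Real.sqrt_pos.mpr hD
  have hb : 0 < mu / 2 - lam := by linarith
  have hslt : s < mu / 2 - lam := by
    have h1 : s ^ 2 < (mu / 2 - lam) ^ 2 := by
      rw [hs2]; nlinarith
    nlinarith [hspos]
  refine ⟨(mu / 2 - lam - s) / mu, (mu / 2 - lam + s) / mu, ?_, ?_, ?_, ?_⟩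
  · apply div_pos (by linarith) hmu
  · apply div_pos (by linarith) hmu
  · intro h
    rw [div_eq_div_iff hmu' hmu'] at h
    nlinarith [hspos, hmu]
  · intro x hx
    have key : (lam - gam) * x + (mu / 2 - lam) * x ^ 2 - mu / 2 * x ^ 3 =
        -(mu / 2) * x * (x - (mu / 2 - lam - s) / mu) * (x - (mu / 2 - lam + s) / mu) := by
      field_simp
      linear_combination (-4 * x) * hs2
    rw [key]
    constructor
    · intro h
      rcases mul_eq_zero.mp h with h1 | h2
      · rcases mul_eq_zero.mp h1 with h3 | h4
        · rcases mul_eq_zero.mp h3 with h5 | h6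
          · exfalso; have : mu / 2 ≠ 0 := by positivity
            simp at h5; exact this (by linarith)
          · exact Or.inl h6
        · exact Or.inr (Or.inl (sub_eq_zero.mp h4))
      · exact Or.inr (Or.inr (sub_eq_zero.mp h2))
    · rintro (rfl | rfl | rfl) <;> ring
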